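/- The entries of any 3×3 magic matrix over a unital C*-algebra pairwise commute. -/

import Mathlib

def IsMagic {A : Type*} [NormedRing A] [StarRing A] [CStarRing A] {N : ℕ}
    (u : Fin N → Fin N → A) : Prop :=
  (∀ i j, star (u i j) = u i j ∧ u i j * u i j = u i j) ∧
  (∀ i, ∑ j, u i j = 1) ∧ (∀ j, ∑ i, u i j = 1)

private lemma ortho3 {A : Type*} [Ring A] [Module ℂ A] {p q r : A}
    (hp : p * p = p) (hq : q * q = q) (hr : r * r = r)
    (hsum : p + q + r = 1) : p * q = 0 ∧ q * p = 0 := by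
  have hr2 : r = 1 - p - q := by rw [← hsum]; abel
  have key : p * q + q * p = 0 := by
    have h1 : p * q + q * p
        = (1 - p - q) * (1 - p - q) - (1 - p - q) - (p * p - p) - (q * q - q) := by
      noncomm_ring
    rw [h1, ← hr2, hr, hp, hq]
    abel
  have h2 : p * q + p * q * p = 0 := by
    have := congrArg (fun x => p * x) key
    simpa [mul_add, ← mul_assoc, hp] using this
  have h3 : p * q * p + q * p = 0 := by
    have := congrArg (fun x => x * p) key
    simpa [add_mul, mul_assoc, hq, hp] using this
  have heq : p * q = q * p := by
    have h4 : p * q - q * p = (p * q + p * q * p) - (p * q * p + q * p) := by abel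
    rw [h2, h3, sub_zero] at h4
    exact sub_eq_zero.mp h4
  have key' : p * q + p * q = 0 := by rw [heq] at key ⊢; exact key
  have h5 : (2 : ℂ) • (p * q) = 0 := by rw [two_smul]; exact key'
  have h6 : p * q = 0 := by
    rcases smul_eq_zero.mp h5 with h | h
    · norm_num at h
    · exact h
  exact ⟨h6, heq ▸ h6⟩

private lemma sum_three_distinct {M : Type*} [AddCommMonoid M] (f : Fin 3 → M)
    {j l n : Fin 3} (h1 : j ≠ l) (h2 : j ≠ n) (h3 : l ≠ n) :
    f j + f l + f n = ∑ x, f x := by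
  fin_cases j <;> fin_cases l <;> fin_cases n <;>
    simp_all [Fin.sum_univ_three] <;> abel

private lemma hard {A : Type*} [NormedRing A] [StarRing A] [CStarRing A]
    [NormedAlgebra ℂ A]
    (u : Fin 3 → Fin 3 → A) (hu : IsMagic u)
    {i k m j l n : Fin 3} (hik : i ≠ k) (him : i ≠ m) (hkm : k ≠ m)
    (hjl : j ≠ l) (hjn : j ≠ n) (hln : l ≠ n) :
    u i j * u k l = u k l * u i j := by
  obtain ⟨hproj, hrow, hcol⟩ := hu
  have idem : ∀ a b, u a b * u a b = u a b := fun a b => (hproj a b).2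
  have sa : ∀ a b, star (u a b) = u a b := fun a b => (hproj a b).1
  have rowsum : ∀ a, u a j + u a l + u a n = 1 := fun a => by
    rw [sum_three_distinct (u a) hjl hjn hln]; exact hrow a
  have colsum : ∀ b, u i b + u k b + u m b = 1 := fun b => by
    rw [sum_three_distinct (fun a => u a b) hik him hkm]; exact hcol b
  have orth2 : ∀ {p q r : A}, p*p=p → q*q=q → r*r=r → p+q+r=1 → p*q = 0 :=
    fun hp hq hr hs => (ortho3 hp hq hr hs).1
  have o1 : u i j * u k j = 0 :=
    orth2 (idem i j) (idem k j) (idem m j) (colsum j)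
  have o2 : u i j * u i n = 0 :=
    orth2 (idem i j) (idem i n) (idem i l) (by rw [← rowsum i]; abel)
  have o3 : u k l * u i l = 0 :=
    orth2 (idem k l) (idem i l) (idem m l) (by rw [← colsum l]; abel)
  have o4 : u k l * u k n = 0 :=
    orth2 (idem k l) (idem k n) (idem k j) (by rw [← rowsum k]; abel)
  have o5 : u k j * u k l = 0 :=
    orth2 (idem k j) (idem k l) (idem k n) (rowsum k)
  have o6 : u m l * u k l = 0 :=
    orth2 (idem m l) (idem k l) (idem i l) (by rw [← colsum l]; abel)
  have o7 : u i l * u i j = 0 :=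
    orth2 (idem i l) (idem i j) (idem i n) (by rw [← rowsum i]; abel)
  have o8 : u m j * u i j = 0 :=
    orth2 (idem m j) (idem i j) (idem k j) (by rw [← colsum j]; abel)
  -- the four key relations with r := u m n
  have hq' : u k l = 1 - u k j - u k n := by rw [← rowsum k]; abel
  have hkn : u k n = 1 - u i n - u m n := by rw [← colsum n]; abel
  have h1 : u i j * u k l = u i j * u m n := by
    calc u i j * u k l = u i j * (1 - u k j - u k n) := by rw [← hq']
      _ = u i j - u i j * u k j - u i j * u k n := by noncomm_ring
      _ = u i j - u i j * (1 - u i n - u m n) := by rw [o1, hkn, sub_zero]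
      _ = u i j * u i n + u i j * u m n := by noncomm_ring
      _ = u i j * u m n := by rw [o2, zero_add]
  have hp' : u i j = 1 - u i l - u i n := by rw [← rowsum i]; abel
  have hin : u i n = 1 - u k n - u m n := by rw [← colsum n]; abel
  have h2 : u k l * u i j = u k l * u m n := by
    calc u k l * u i j = u k l * (1 - u i l - u i n) := by rw [← hp']
      _ = u k l - u k l * u i l - u k l * u i n := by noncomm_ring
      _ = u k l - u k l * (1 - u k n - u m n) := by rw [o3, hin, sub_zero]
      _ = u k l * u k n + u k l * u m n := by noncomm_ring
      _ = u k l * u m n := by rw [o4, zero_add]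
  have hp'' : u i j = 1 - u k j - u m j := by rw [← colsum j]; abel
  have hmj : u m j = 1 - u m l - u m n := by rw [← rowsum m]; abel
  have h3 : u i j * u k l = u m n * u k l := by
    calc u i j * u k l = (1 - u k j - u m j) * u k l := by rw [← hp'']
      _ = u k l - u k j * u k l - u m j * u k l := by noncomm_ring
      _ = u k l - (1 - u m l - u m n) * u k l := by rw [o5, hmj, sub_zero]
      _ = u m l * u k l + u m n * u k l := by noncomm_ring
      _ = u m n * u k l := by rw [o6, zero_add]
  have hq'' : u k l = 1 - u i l - u m l := by rw [← colsum l]; abel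
  have hml : u m l = 1 - u m j - u m n := by rw [← rowsum m]; abel
  have h4 : u k l * u i j = u m n * u i j := by
    calc u k l * u i j = (1 - u i l - u m l) * u i j := by rw [← hq'']
      _ = u i j - u i l * u i j - u m l * u i j := by noncomm_ring
      _ = u i j - (1 - u m j - u m n) * u i j := by rw [o7, hml, sub_zero]
      _ = u m j * u i j + u m n * u i j := by noncomm_ring
      _ = u m n * u i j := by rw [o8, zero_add]
  set P := u i j with hP
  set Q := u k l with hQ
  set R := u m n with hR
  have hPP : P * P = P := idem i j
  have hQQ : Q * Q = Q := idem k l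
  have hRR : R * R = R := idem m n
  -- x = P*Q is idempotent
  have hx : (P*Q)*(P*Q) = P*Q := by
    calc (P*Q)*(P*Q) = (P*R)*(R*Q) := by nth_rewrite 2 [h3]; rw [h1]
      _ = P*(R*R)*Q := by noncomm_ring
      _ = (P*R)*Q := by rw [hRR]
      _ = (P*Q)*Q := by rw [← h1]
      _ = P*(Q*Q) := by noncomm_ring
      _ = P*Q := by rw [hQQ]
  have e1 : (P*Q)*(Q*P) = P*Q*P := by
    calc (P*Q)*(Q*P) = P*(Q*Q)*P := by noncomm_ring
      _ = P*Q*P := by rw [hQQ]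
  have e2 : (P*Q)*(P*Q*P) = P*Q*P := by
    calc (P*Q)*(P*Q*P) = ((P*Q)*(P*Q))*P := by noncomm_ring
      _ = P*Q*P := by rw [hx]
  have e3 : (P*Q*P)*(Q*P) = P*Q*P := by
    calc (P*Q*P)*(Q*P) = ((P*Q)*(P*Q))*P := by noncomm_ring
      _ = P*Q*P := by rw [hx]
  have e4 : (P*Q*P)*(P*Q*P) = P*Q*P := by
    calc (P*Q*P)*(P*Q*P) = P*Q*(P*P)*(Q*P) := by noncomm_ring
      _ = (P*Q*P)*(Q*P) := by rw [hPP]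
      _ = P*Q*P := e3
  have hstar : star (P*Q - P*Q*P) = Q*P - P*Q*P := by
    simp [star_sub, star_mul, sa i j, sa k l, mul_assoc, ← hP, ← hQ,
      show star P = P from sa i j, show star Q = Q from sa k l]
  have hzero : (P*Q - P*Q*P) * star (P*Q - P*Q*P) = 0 := by
    rw [hstar]
    calc (P*Q - P*Q*P) * (Q*P - P*Q*P)
        = (P*Q)*(Q*P) - (P*Q)*(P*Q*P) - (P*Q*P)*(Q*P) + (P*Q*P)*(P*Q*P) := by
          noncomm_ring
      _ = P*Q*P - P*Q*P - (P*Q*P) + P*Q*P := by rw [e1, e2, e3, e4]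
      _ = 0 := by abel
  have hPQP : P*Q = P*Q*P := by
    have := (CStarRing.mul_star_self_eq_zero_iff (P*Q - P*Q*P)).mp hzero
    exact sub_eq_zero.mp this
  have hQPP : Q*P = P*Q*P := by
    have h := congrArg star hPQP
    have hs1 : star (P*Q) = Q*P := by
      rw [star_mul]; rw [show star Q = Q from (by rw [hQ]; exact sa k l),
        show star P = P from (by rw [hP]; exact sa i j)]
    have hs2 : star (P*Q*P) = P*Q*P := by
      simp [star_mul, show star Q = Q from (by rw [hQ]; exact sa k l),
        show star P = P from (by rw [hP]; exact sa i j), mul_assoc]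
    rw [hs1, hs2] at h
    exact h
  rw [hPQP, hQPP]

theorem magic_three_commutes {A : Type*} [NormedRing A] [StarRing A]
    [CStarRing A] [CompleteSpace A] [NormedAlgebra ℂ A]
    (u : Fin 3 → Fin 3 → A) (hu : IsMagic u) :
    ∀ i j k l, u i j * u k l = u k l * u i j := by
  have third : ∀ j l : Fin 3, j ≠ l → ∃ n, j ≠ n ∧ l ≠ n := by decide
  obtain ⟨hproj, hrow, hcol⟩ := hu
  intro i j k l
  by_cases hik : i = k
  · subst hik
    by_cases hjl : j = l
    · subst hjl; rfl
    · obtain ⟨n, hjn, hln⟩ := third j l hjl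
      have hs : u i j + u i l + u i n = 1 := by
        rw [sum_three_distinct (u i) hjl hjn hln]; exact hrow i
      have h1 := ortho3 (hproj i j).2 (hproj i l).2 (hproj i n).2 hs
      rw [h1.1, h1.2]
  · by_cases hjl : j = l
    · subst hjl
      obtain ⟨m, him, hkm⟩ := third i k hik
      have hs : u i j + u k j + u m j = 1 := by
        rw [sum_three_distinct (fun a => u a j) hik him hkm]; exact hcol j
      have h1 := ortho3 (hproj i j).2 (hproj k j).2 (hproj m j).2 hs
      rw [h1.1, h1.2]
    · obtain ⟨m, him, hkm⟩ := third i k hik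
      obtain ⟨n, hjn, hln⟩ := third j l hjl
      exact hard u ⟨hproj, hrow, hcol⟩ hik him hkm hjl hjn hln
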